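/- arXiv:2107.04458 — 4 statements merged into one kernel-verified Lean document; each statement's English description precedes it below -/
import Mathlib

section
/- Let X be a random variable with the Gamma(a, s) distribution and let g(x) = α(exp(βx) − 1) with α > 0 and β > 0. Then the law of g(X) (the pushforward of the Gamma(a,s) measure under g) has density h(x) = (1/(α·Γ(a)·β^a·s^a)) · (ln(1 + x/α))^(a−1) · (1 + x/α)^(−(βs+1)/(βs)) with respect to Lebesgue measure on (0, ∞), and density 0 on (−∞, 0]. -/
open MeasureTheory Set

/-- The Gamma distribution with shape `a > 0` and scale `s > 0`: the measure on `ℝ`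
with density `x^(a−1)·exp(−x/s)/(Γ(a)·s^a)` for `x > 0` and `0` otherwise. -/
noncomputable def gammaScaleMeasure (a s : ℝ) : Measure ℝ :=
  volume.withDensity fun x =>
    ENNReal.ofReal
      (if 0 < x then x ^ (a - 1) * Real.exp (-x / s) / (Real.Gamma a * s ^ a) else 0)

set_option maxHeartbeats 1000000 in
/-- **Proposition 1 of the paper.** If `X` has the `Gamma(a, s)` distribution and
`g(x) = α(exp(βx) − 1)` with `α > 0`, `β > 0`, then the law of `g(X)` has density
`h(x) = (ln(1 + x/α))^(a−1) · (1 + x/α)^(−(βs+1)/(βs)) / (α·Γ(a)·β^a·s^a)`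
with respect to Lebesgue measure on `(0, ∞)` and density `0` on `(−∞, 0]`. -/
theorem law_expGamma_density {Ω : Type*} [MeasurableSpace Ω] (P : Measure Ω)
    [IsProbabilityMeasure P] (X : Ω → ℝ) (hX : Measurable X)
    (a s α β : ℝ) (ha : 0 < a) (hs : 0 < s) (hα : 0 < α) (hβ : 0 < β)
    (hlaw : Measure.map X P = gammaScaleMeasure a s) :
    Measure.map (fun ω => α * (Real.exp (β * X ω) - 1)) P =
      volume.withDensity fun x =>
        ENNReal.ofReal
          (if 0 < x then
            Real.log (1 + x / α) ^ (a - 1) * (1 + x / α) ^ (-((β * s + 1) / (β * s))) /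
              (α * Real.Gamma a * β ^ a * s ^ a)
          else 0) := by
  set g : ℝ → ℝ := fun x => α * (Real.exp (β * x) - 1) with hg_def
  have hgcont : Continuous g := by continuity
  have hgmeas : Measurable g := hgcont.measurable
  have hginj : Function.Injective g := by
    intro x y hxy
    simp only [hg_def] at hxy
    have h1 : Real.exp (β * x) = Real.exp (β * y) := by
      have := mul_left_cancel₀ hα.ne' hxy
      linarith
    exact mul_left_cancel₀ hβ.ne' (Real.exp_injective h1)
  have hgpos : ∀ x : ℝ, 0 < g x ↔ 0 < x := by
    intro x
    have h1 : 0 < g x ↔ 1 < Real.exp (β * x) := by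
      simp only [hg_def]
      constructor <;> intro h <;> nlinarith
    rw [h1, show (1:ℝ) = Real.exp 0 by simp, Real.exp_lt_exp]
    constructor <;> intro h <;> nlinarith
  have hrange : Ioi (0:ℝ) ⊆ Set.range g := by
    intro y hy
    have hy0 : (0:ℝ) < y := hy
    have hy1 : 0 < y / α + 1 := by positivity
    refine ⟨Real.log (y / α + 1) / β, ?_⟩
    simp only [hg_def]
    rw [mul_div_cancel₀ _ hβ.ne', Real.exp_log hy1]
    field_simp
    ring
  -- derivative
  set g' : ℝ → ℝ := fun x => α * (β * Real.exp (β * x)) with hg'_def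
  have hderiv : ∀ x : ℝ, HasDerivAt g (g' x) x := by
    intro x
    have h1 : HasDerivAt (fun x : ℝ => β * x) (β * 1) x := (hasDerivAt_id x).const_mul β
    have h2 := (h1.exp.sub_const 1).const_mul α
    have h3 : α * (Real.exp (β * x) * (β * 1)) = g' x := by simp only [hg'_def]; ring
    exact h3 ▸ h2
  -- rewrite the map
  have hcomp : (fun ω => α * (Real.exp (β * X ω) - 1)) = g ∘ X := rfl
  rw [hcomp, ← Measure.map_map hgmeas hX, hlaw]
  refine Measure.ext fun A hA => ?_
  rw [Measure.map_apply hgmeas hA, gammaScaleMeasure,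
    withDensity_apply _ (hgmeas hA), withDensity_apply _ hA]
  -- indicator forms
  have hind : ∀ (F : ℝ → ℝ) (t : Set ℝ), MeasurableSet t →
      ∫⁻ x in t, ENNReal.ofReal (if 0 < x then F x else 0)
        = ∫⁻ x in Ioi 0 ∩ t, ENNReal.ofReal (F x) := by
    intro F t ht
    rw [← setLIntegral_indicator measurableSet_Ioi]
    refine setLIntegral_congr_fun ht (fun x _ => ?_)
    by_cases hx : 0 < x <;> simp [indicator_apply, hx]
  rw [hind _ _ (hgmeas hA), hind _ _ hA]
  have hset : Ioi 0 ∩ g ⁻¹' A = g ⁻¹' (Ioi 0 ∩ A) := by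
    ext x
    simp [mem_preimage, mem_Ioi, hgpos x, and_comm]
  rw [hset]
  have himg : g '' (g ⁻¹' (Ioi 0 ∩ A)) = Ioi 0 ∩ A := by
    rw [Set.image_preimage_eq_inter_range,
      Set.inter_eq_self_of_subset_left (inter_subset_left.trans hrange)]
  have hmeas_pre : MeasurableSet (g ⁻¹' (Ioi 0 ∩ A)) :=
    hgmeas (measurableSet_Ioi.inter hA)
  have hF' : ∀ x ∈ g ⁻¹' (Ioi 0 ∩ A),
      HasFDerivWithinAt g ((1 : ℝ →L[ℝ] ℝ).smulRight (g' x)) (g ⁻¹' (Ioi 0 ∩ A)) x :=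
    fun x _ => ((hderiv x).hasFDerivAt).hasFDerivWithinAt
  conv_rhs => rw [← himg]
  rw [lintegral_image_eq_lintegral_abs_det_fderiv_mul volume hmeas_pre hF' hginj.injOn _]
  simp only [ContinuousLinearMap.smulRight_one_eq_toSpanSingleton, ContinuousLinearMap.det_toSpanSingleton]
  refine setLIntegral_congr_fun hmeas_pre (fun x hx => ?_)
  have hxpos : 0 < x := (hgpos x).mp hx.1
  rw [← ENNReal.ofReal_mul (abs_nonneg _)]
  congr 1
  symm
  -- pointwise real computation
  have h1 : 1 + g x / α = Real.exp (β * x) := by simp only [hg_def]; field_simp; ring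
  simp only [hg'_def]
  rw [h1, Real.log_exp, abs_of_pos (by positivity)]
  rw [Real.rpow_def_of_pos (Real.exp_pos _), Real.log_exp, Real.mul_rpow hβ.le hxpos.le]
  have hexp : Real.exp (β * x) * Real.exp (β * x * -((β * s + 1) / (β * s)))
      = Real.exp (-x / s) := by
    rw [← Real.exp_add]; congr 1; field_simp; ring
  have hba : β ^ a = β * β ^ (a - 1) := by
    have := Real.rpow_add hβ 1 (a - 1)
    rw [Real.rpow_one] at this
    simpa using this
  rw [hba, ← hexp]
  have hbne : β ^ (a - 1) ≠ 0 := by positivity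
  field_simp
end

section
/- Let X be a random variable whose law is the mixed zero-Gamma measure μ_mix = p·δ₀ + (1 − p)·Gamma(a, s), with 0 ≤ p ≤ 1, a > 0, s > 0, and let g(x) = α(exp(βx) − 1) with α > 0, β > 0 and 2βs < 1. Then Var(g(X)) = α²·(1 − p)·[ 1/(1 − 2βs)^a − (1 − p)/(1 − βs)^(2a) − 2p/(1 − βs)^a + p ]. -/
open MeasureTheory Set ENNReal NNReal

/-- The mixed zero-Gamma measure `μ_mix = p·δ₀ + (1 − p)·Gamma(a, s)` of the paper
(Eq. (6)): point mass `p` at `0` mixed with the `Gamma(a, s)` distribution. -/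
noncomputable def zeroGammaMeasure (p a s : ℝ) : Measure ℝ :=
  ENNReal.ofReal p • Measure.dirac (0 : ℝ) + ENNReal.ofReal (1 - p) • gammaScaleMeasure a s



lemma gamma_mgf {a s t : ℝ} (ha : 0 < a) (hs : 0 < s) (ht : t * s < 1) :
    Integrable (fun x => Real.exp (t * x)) (gammaScaleMeasure a s) ∧
      ∫ x, Real.exp (t * x) ∂(gammaScaleMeasure a s) = 1 / (1 - t * s) ^ a := by
  set C : ℝ := Real.Gamma a * s ^ a with hC
  have hCpos : 0 < C := mul_pos (Real.Gamma_pos_of_pos ha) (Real.rpow_pos_of_pos hs a)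
  set dens : ℝ → ℝ := fun x =>
    if 0 < x then x ^ (a - 1) * Real.exp (-x / s) / C else 0 with hdens
  have hdens_nonneg : ∀ x, 0 ≤ dens x := by
    intro x
    simp only [hdens]
    split
    · positivity
    · exact le_refl 0
  have hdens_meas : Measurable dens := by
    apply Measurable.ite measurableSet_Ioi ?_ measurable_const
    fun_prop
  set r : ℝ := 1 / s - t with hr
  have hrpos : 0 < r := by
    have h1 : t < 1 / s := by rw [lt_div_iff₀ hs]; linarith
    rw [hr]; linarith
  have hrs : r * s = 1 - t * s := by
    rw [hr]; field_simp
  -- rewrite measure with NNReal density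
  have hmeas_eq : gammaScaleMeasure a s
      = volume.withDensity (fun x => ((dens x).toNNReal : ℝ≥0∞)) := rfl
  -- the combined function on Ioi 0
  have hcomb : ∀ x, dens x * Real.exp (t * x)
      = Set.indicator (Ioi 0) (fun x => (1 / C) * (x ^ (a - 1) * Real.exp (-(r * x)))) x := by
    intro x
    by_cases hx : 0 < x
    · simp only [hdens, if_pos hx, Set.indicator_of_mem (mem_Ioi.mpr hx)]
      have he : Real.exp (-x / s) * Real.exp (t * x) = Real.exp (-(r * x)) := by
        rw [← Real.exp_add]; congr 1; rw [hr]; field_simp; ring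
      rw [div_mul_eq_mul_div, mul_assoc, he]; ring
    · simp [hdens, if_neg hx, Set.indicator_of_notMem (fun h => hx (mem_Ioi.mp h))]
  have hIntOn : IntegrableOn (fun x => (1 / C) * (x ^ (a - 1) * Real.exp (-(r * x)))) (Ioi 0) := by
    apply Integrable.const_mul
    have := integrableOn_rpow_mul_exp_neg_mul_rpow (p := 1) (s := a - 1) (b := r)
      (by linarith) zero_lt_one hrpos
    apply this.congr_fun ?_ measurableSet_Ioi
    intro x hx
    show x ^ (a - 1) * Real.exp (-r * x ^ (1 : ℝ)) = _
    rw [Real.rpow_one, neg_mul]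
  have hIntComb : Integrable (fun x => dens x * Real.exp (t * x)) volume := by
    rw [funext hcomb]
    exact (integrable_indicator_iff measurableSet_Ioi).mpr hIntOn
  have hsmul : ∀ x, ((dens x).toNNReal : ℝ) • Real.exp (t * x) = dens x * Real.exp (t * x) := by
    intro x
    rw [Real.coe_toNNReal _ (hdens_nonneg x)]
    rfl
  have hInt : Integrable (fun x => Real.exp (t * x)) (gammaScaleMeasure a s) := by
    rw [hmeas_eq, integrable_withDensity_iff_integrable_smul (hdens_meas.real_toNNReal)]
    apply hIntComb.congr
    filter_upwards with x
    rw [← hsmul x]; rfl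
  refine ⟨hInt, ?_⟩
  rw [hmeas_eq, integral_withDensity_eq_integral_smul (hdens_meas.real_toNNReal)]
  have : ∫ x, ((dens x).toNNReal : ℝ≥0) • Real.exp (t * x)
      = ∫ x, dens x * Real.exp (t * x) := by
    congr 1
    funext x
    rw [← hsmul x]; rfl
  rw [this, funext hcomb, integral_indicator measurableSet_Ioi,
    MeasureTheory.integral_const_mul, Real.integral_rpow_mul_exp_neg_mul_Ioi ha hrpos]
  rw [hC]
  rw [Real.div_rpow (by positivity) hrpos.le]
  rw [Real.one_rpow, ← hrs]
  rw [Real.mul_rpow hrpos.le hs.le]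
  field_simp

lemma zg_mgf {p a s t : ℝ} (hp0 : 0 ≤ p) (hp1 : p ≤ 1) (ha : 0 < a) (hs : 0 < s)
    (ht : t * s < 1) :
    Integrable (fun x => Real.exp (t * x)) (zeroGammaMeasure p a s) ∧
      ∫ x, Real.exp (t * x) ∂(zeroGammaMeasure p a s)
        = p + (1 - p) * (1 / (1 - t * s) ^ a) := by
  obtain ⟨hint, hval⟩ := gamma_mgf ha hs ht
  have hdirac : Integrable (fun x => Real.exp (t * x)) (Measure.dirac (0 : ℝ)) := by
    refine ⟨(Real.continuous_exp.comp (continuous_const.mul continuous_id)).aestronglyMeasurable, ?_⟩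
    simp [HasFiniteIntegral, lintegral_dirac]
  have h1 : Integrable (fun x => Real.exp (t * x)) (ENNReal.ofReal p • Measure.dirac (0 : ℝ)) :=
    hdirac.smul_measure ENNReal.ofReal_ne_top
  have h2 : Integrable (fun x => Real.exp (t * x)) (ENNReal.ofReal (1 - p) • gammaScaleMeasure a s) :=
    hint.smul_measure ENNReal.ofReal_ne_top
  refine ⟨h1.add_measure h2, ?_⟩
  rw [zeroGammaMeasure, integral_add_measure h1 h2, integral_smul_measure, integral_smul_measure,
    hval, integral_dirac, ENNReal.toReal_ofReal hp0, ENNReal.toReal_ofReal (by linarith)]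
  simp only [mul_zero, Real.exp_zero, smul_eq_mul, mul_one]

/-- Variance of the zero-ExpGamma distribution (Eq. (12) of the paper): if the law of `X`
is the mixed zero-Gamma measure and `g(x) = α(exp(βx) − 1)` with `α > 0`, `β > 0`,
`2βs < 1`, then (with `Var(Y) = E[Y²] − (E[Y])²`)
`Var(g(X)) = α²·(1 − p)·[1/(1 − 2βs)^a − (1 − p)/(1 − βs)^(2a) − 2p/(1 − βs)^a + p]`. -/
theorem zeroExpGamma_variance {Ω : Type*} [MeasurableSpace Ω] (P : Measure Ω)
    [IsProbabilityMeasure P] (X : Ω → ℝ) (hX : Measurable X)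
    (p a s α β : ℝ) (hp0 : 0 ≤ p) (hp1 : p ≤ 1) (ha : 0 < a) (hs : 0 < s)
    (hα : 0 < α) (hβ : 0 < β) (hβs : 2 * β * s < 1)
    (hlaw : Measure.map X P = zeroGammaMeasure p a s) :
    (∫ ω, (α * (Real.exp (β * X ω) - 1)) ^ 2 ∂P) -
        (∫ ω, α * (Real.exp (β * X ω) - 1) ∂P) ^ 2 =
      α ^ 2 * (1 - p) *
        (1 / (1 - 2 * β * s) ^ a - (1 - p) / (1 - β * s) ^ (2 * a) -
          2 * p / (1 - β * s) ^ a + p) := by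
  have hβs1 : β * s < 1 := by nlinarith
  have h2βs : (2 * β) * s < 1 := by linarith
  have h0s : (0 : ℝ) * s < 1 := by norm_num
  obtain ⟨iβ, vβ⟩ := zg_mgf (t := β) hp0 hp1 ha hs hβs1
  obtain ⟨i2β, v2β⟩ := zg_mgf (t := 2 * β) hp0 hp1 ha hs h2βs
  obtain ⟨i0, v0⟩ := zg_mgf (t := 0) hp0 hp1 ha hs h0s
  have hv0 : ∫ x, Real.exp (0 * x) ∂(zeroGammaMeasure p a s) = 1 := by
    rw [v0]; simp
  -- transfer integrals along the law
  have e1 : ∫ ω, α * (Real.exp (β * X ω) - 1) ∂P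
      = ∫ x, α * (Real.exp (β * x) - 1) ∂(zeroGammaMeasure p a s) := by
    rw [← hlaw, integral_map hX.aemeasurable]
    exact (Continuous.aestronglyMeasurable (by continuity))
  have e2 : ∫ ω, (α * (Real.exp (β * X ω) - 1)) ^ 2 ∂P
      = ∫ x, (α * (Real.exp (β * x) - 1)) ^ 2 ∂(zeroGammaMeasure p a s) := by
    rw [← hlaw, integral_map hX.aemeasurable]
    exact (Continuous.aestronglyMeasurable (by continuity))
  rw [e1, e2]
  -- compute first moment
  have key1 : (fun x => α * (Real.exp (β * x) - 1))
      = fun x => α * Real.exp (β * x) - α * Real.exp (0 * x) := by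
    funext x; rw [zero_mul, Real.exp_zero]; ring
  have m1 : ∫ x, α * (Real.exp (β * x) - 1) ∂(zeroGammaMeasure p a s)
      = α * (∫ x, Real.exp (β * x) ∂(zeroGammaMeasure p a s)) - α * 1 := by
    rw [key1, integral_sub (iβ.const_mul α) (i0.const_mul α),
      integral_const_mul, integral_const_mul, hv0]
  -- compute second moment
  have key2 : (fun x => (α * (Real.exp (β * x) - 1)) ^ 2)
      = fun x => (α ^ 2 * Real.exp ((2 * β) * x) - 2 * α ^ 2 * Real.exp (β * x))
          + α ^ 2 * Real.exp (0 * x) := by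
    funext x
    rw [show (2 * β) * x = β * x + β * x by ring, Real.exp_add, zero_mul, Real.exp_zero]
    ring
  have m2 : ∫ x, (α * (Real.exp (β * x) - 1)) ^ 2 ∂(zeroGammaMeasure p a s)
      = (α ^ 2 * (∫ x, Real.exp ((2 * β) * x) ∂(zeroGammaMeasure p a s))
          - 2 * α ^ 2 * (∫ x, Real.exp (β * x) ∂(zeroGammaMeasure p a s))) + α ^ 2 * 1 := by
    have isub : Integrable
        (fun x => α ^ 2 * Real.exp ((2 * β) * x) - 2 * α ^ 2 * Real.exp (β * x))
        (zeroGammaMeasure p a s) := (i2β.const_mul _).sub (iβ.const_mul _)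
    rw [key2, integral_add isub (i0.const_mul _),
      integral_sub (i2β.const_mul _) (iβ.const_mul _),
      integral_const_mul, integral_const_mul, integral_const_mul, hv0]
  rw [m1, m2, vβ, v2β]
  -- algebra
  have hb1 : (0 : ℝ) < 1 - β * s := by linarith
  have hb2 : (0 : ℝ) < 1 - 2 * β * s := by linarith
  have hu : (0 : ℝ) < (1 - β * s) ^ a := Real.rpow_pos_of_pos hb1 a
  have hw : (0 : ℝ) < (1 - 2 * β * s) ^ a := Real.rpow_pos_of_pos hb2 a
  have h2a : (1 - β * s) ^ (2 * a) = ((1 - β * s) ^ a) ^ 2 := by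
    rw [mul_comm 2 a, Real.rpow_mul hb1.le, show ((2 : ℝ) = ((2 : ℕ) : ℝ)) by norm_num,
      Real.rpow_natCast]
  rw [h2a]
  set u : ℝ := (1 - β * s) ^ a
  set w : ℝ := (1 - (2 * β) * s) ^ a
  field_simp
  ring
end

section
/- Let X be a random variable whose law is the mixed zero-Gamma measure μ_mix = p·δ₀ + (1 − p)·Gamma(a, s), with 0 ≤ p ≤ 1, a > 0, s > 0, and let g(x) = α(exp(βx) − 1) with α > 0, β > 0 and 2βs < 1. Then E[g(X)²] = α²·(1 − p)·(1/(1 − 2βs)^a − 2/(1 − βs)^a + 1). -/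
open MeasureTheory

open Set

section helpers

variable (a s t : ℝ)

noncomputable def gsDens (x : ℝ) : ℝ :=
  if 0 < x then x ^ (a - 1) * Real.exp (-x / s) / (Real.Gamma a * s ^ a) else 0

lemma gsDens_meas : Measurable (gsDens a s) := by
  unfold gsDens
  apply Measurable.ite measurableSet_Ioi _ measurable_const
  fun_prop

lemma gsDens_nonneg (ha : 0 < a) (hs : 0 < s) (x : ℝ) : 0 ≤ gsDens a s x := by
  unfold gsDens
  split
  · have := Real.Gamma_pos_of_pos ha
    positivity
  · exact le_refl _

lemma gammaScale_eq : gammaScaleMeasure a s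
    = volume.withDensity (fun x => ((Real.toNNReal (gsDens a s x)) : ENNReal)) := rfl

lemma gs_mul_exp_eq (ha : 0 < a) (hs : 0 < s) :
    (fun x => gsDens a s x * Real.exp (t * x)) =
      Set.indicator (Ioi (0:ℝ))
        (fun x => x ^ (a-1) * Real.exp (-((1/s - t) * x)) / (Real.Gamma a * s ^ a)) := by
  funext x
  by_cases hx : 0 < x
  · simp only [gsDens, if_pos hx, indicator_of_mem (mem_Ioi.mpr hx)]
    rw [div_mul_eq_mul_div, mul_assoc, ← Real.exp_add]
    congr 2
    field_simp
    ring
  · simp [gsDens, if_neg hx, indicator_of_notMem (fun h => hx (mem_Ioi.mp h))]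

lemma base_integrableOn (ha : 0 < a) (hr : 0 < 1/s - t) :
    IntegrableOn (fun x : ℝ => x ^ (a-1) * Real.exp (-((1/s - t) * x))) (Ioi 0) volume := by
  have := integrableOn_rpow_mul_exp_neg_mul_rpow (p := 1) (s := a - 1) (b := 1/s - t)
    (by linarith) one_pos hr
  refine this.congr_fun (fun x hx => ?_) measurableSet_Ioi
  simp only [Real.rpow_one]
  ring_nf

lemma gamma_exp_integrable (ha : 0 < a) (hs : 0 < s) (hts : t * s < 1) :
    Integrable (fun x => Real.exp (t * x)) (gammaScaleMeasure a s) := by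
  have hr : 0 < 1/s - t := by
    have : t < 1 / s := (lt_div_iff₀ hs).mpr hts
    linarith
  rw [gammaScale_eq]
  rw [integrable_withDensity_iff_integrable_smul ((gsDens_meas a s).real_toNNReal)]
  have h1 : (fun x => (Real.toNNReal (gsDens a s x)) • Real.exp (t * x)) =
      (fun x => gsDens a s x * Real.exp (t * x)) := by
    funext x
    simp [NNReal.smul_def, Real.coe_toNNReal _ (gsDens_nonneg a s ha hs x)]
  rw [h1, gs_mul_exp_eq a s t ha hs]
  rw [integrable_indicator_iff measurableSet_Ioi]
  exact (base_integrableOn a s t ha hr).div_const _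

lemma gamma_exp_integral (ha : 0 < a) (hs : 0 < s) (hts : t * s < 1) :
    ∫ x, Real.exp (t * x) ∂(gammaScaleMeasure a s) = 1 / (1 - t * s) ^ a := by
  have hr : 0 < 1/s - t := by
    have : t < 1 / s := (lt_div_iff₀ hs).mpr hts
    linarith
  have hG := Real.Gamma_pos_of_pos ha
  rw [gammaScale_eq, integral_withDensity_eq_integral_smul ((gsDens_meas a s).real_toNNReal)]
  have h1 : (fun x => (Real.toNNReal (gsDens a s x)) • Real.exp (t * x)) =
      (fun x => gsDens a s x * Real.exp (t * x)) := by
    funext x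
    simp [NNReal.smul_def, Real.coe_toNNReal _ (gsDens_nonneg a s ha hs x)]
  rw [h1, gs_mul_exp_eq a s t ha hs, integral_indicator measurableSet_Ioi]
  rw [integral_div, Real.integral_rpow_mul_exp_neg_mul_Ioi ha hr]
  have hsa : (0:ℝ) < s ^ a := Real.rpow_pos_of_pos hs a
  have hra : (0:ℝ) < (1/s - t) ^ a := Real.rpow_pos_of_pos hr a
  have key : (1 - t * s) ^ a = (1/s - t)^a * s ^ a := by
    rw [← Real.mul_rpow hr.le hs.le]
    congr 1
    field_simp
  rw [key, one_div (1/s - t), Real.inv_rpow hr.le]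
  field_simp

end helpers

/-- Second moment of the zero-ExpGamma distribution (Appendix F of the paper): if the law
of `X` is the mixed zero-Gamma measure and `g(x) = α(exp(βx) − 1)` with `α > 0`, `β > 0`,
`2βs < 1`, then `E[g(X)²] = α²·(1 − p)·(1/(1 − 2βs)^a − 2/(1 − βs)^a + 1)`. -/
theorem zeroExpGamma_second_moment {Ω : Type*} [MeasurableSpace Ω] (P : Measure Ω)
    [IsProbabilityMeasure P] (X : Ω → ℝ) (hX : Measurable X)
    (p a s α β : ℝ) (hp0 : 0 ≤ p) (hp1 : p ≤ 1) (ha : 0 < a) (hs : 0 < s)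
    (hα : 0 < α) (hβ : 0 < β) (hβs : 2 * β * s < 1)
    (hlaw : Measure.map X P = zeroGammaMeasure p a s) :
    ∫ ω, (α * (Real.exp (β * X ω) - 1)) ^ 2 ∂P =
      α ^ 2 * (1 - p) * (1 / (1 - 2 * β * s) ^ a - 2 / (1 - β * s) ^ a + 1) := by
  set f : ℝ → ℝ := fun x => (α * (Real.exp (β * x) - 1)) ^ 2 with hf
  have hmeasg : Measurable f := by fun_prop
  have hstep : ∫ ω, f (X ω) ∂P = ∫ x, f x ∂(zeroGammaMeasure p a s) := by
    rw [← hlaw, integral_map hX.aemeasurable hmeasg.aestronglyMeasurable]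
  have hβs' : β * s < 1 := by nlinarith
  have h0s : (0:ℝ) * s < 1 := by simp
  have hfeq : ∀ x, f x =
      α^2 * Real.exp (2*β*x) - 2*α^2 * Real.exp (β*x) + α^2 * Real.exp (0*x) := by
    intro x
    have h2 : Real.exp (2*β*x) = Real.exp (β*x) * Real.exp (β*x) := by
      rw [← Real.exp_add]; ring_nf
    simp only [hf, h2, zero_mul, Real.exp_zero]
    ring
  have I2 := gamma_exp_integrable a s (2*β) ha hs hβs
  have I1 := gamma_exp_integrable a s β ha hs hβs'
  have I0 := gamma_exp_integrable a s 0 ha hs h0s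
  have hint_gamma : Integrable f (gammaScaleMeasure a s) := by
    refine (((I2.const_mul (α^2)).sub (I1.const_mul (2*α^2))).add
      (I0.const_mul (α^2))).congr (Filter.Eventually.of_forall fun x => (hfeq x).symm)
  have hint_dirac : Integrable f (Measure.dirac (0:ℝ)) := by
    refine ⟨hmeasg.aestronglyMeasurable, ?_⟩
    simp [HasFiniteIntegral, lintegral_dirac]
  have hsub : Integrable (fun x => α^2 * Real.exp (2*β*x) - 2*α^2 * Real.exp (β*x))
      (gammaScaleMeasure a s) := (I2.const_mul (α^2)).sub (I1.const_mul (2*α^2))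
  have hγ : ∫ x, f x ∂(gammaScaleMeasure a s) =
      α^2 * (1/(1 - 2*β*s)^a) - 2*α^2 * (1/(1 - β*s)^a) + α^2 * 1 := by
    have hadd := integral_add hsub (I0.const_mul (α^2)) (μ := gammaScaleMeasure a s)
    have hsub' := integral_sub (I2.const_mul (α^2)) (I1.const_mul (2*α^2))
      (μ := gammaScaleMeasure a s)
    rw [integral_congr_ae (Filter.Eventually.of_forall hfeq), hadd, hsub',
      integral_const_mul, integral_const_mul, integral_const_mul,
      gamma_exp_integral a s (2*β) ha hs hβs,
      gamma_exp_integral a s β ha hs hβs',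
      gamma_exp_integral a s 0 ha hs h0s]
    norm_num
  calc ∫ ω, f (X ω) ∂P = ∫ x, f x ∂(zeroGammaMeasure p a s) := hstep
    _ = α ^ 2 * (1 - p) * (1 / (1 - 2 * β * s) ^ a - 2 / (1 - β * s) ^ a + 1) := by
        unfold zeroGammaMeasure
        rw [integral_add_measure (hint_dirac.smul_measure ENNReal.ofReal_ne_top)
          (hint_gamma.smul_measure ENNReal.ofReal_ne_top),
          integral_smul_measure, integral_smul_measure, integral_dirac, hγ,
          ENNReal.toReal_ofReal hp0, ENNReal.toReal_ofReal (by linarith)]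
        simp only [hf, mul_zero, Real.exp_zero, smul_eq_mul]
        ring
end

section
/- Let X be a random variable with the Gamma(a, s) distribution and let γ > 0. Then the law of X^γ (the pushforward of the Gamma(a,s) measure under x ↦ x^γ) has density w(x) = (1/(γ·Γ(a)·s^a)) · x^(a/γ − 1) · exp(−x^(1/γ)/s) with respect to Lebesgue measure on (0, ∞), and density 0 on (−∞, 0]. -/
open MeasureTheory

open Set in
theorem lintegral_image_eq_lintegral_abs_deriv_mul' {s : Set ℝ} {f : ℝ → ℝ} {f' : ℝ → ℝ}
    (hs : MeasurableSet s) (hf' : ∀ x ∈ s, HasDerivWithinAt f (f' x) s x)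
    (hf : Set.InjOn f s) (g : ℝ → ENNReal) :
    ∫⁻ x in f '' s, g x = ∫⁻ x in s, ENNReal.ofReal |f' x| * g (f x) := by
  simpa only [ContinuousLinearMap.det_toSpanSingleton] using
    lintegral_image_eq_lintegral_abs_det_fderiv_mul volume hs
      (fun x hx => (hf' x hx).hasFDerivWithinAt) hf g


open Set in
theorem setLIntegral_rpow_gamma_aux (a s γ : ℝ) (ha : 0 < a) (hs : 0 < s) (hγ : 0 < γ)
    (A : Set ℝ) (hA : MeasurableSet A) :
    ∫⁻ x in (fun x : ℝ => x ^ γ) ⁻¹' A,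
      ENNReal.ofReal (if 0 < x then x ^ (a - 1) * Real.exp (-x / s) / (Real.Gamma a * s ^ a) else 0)
    = ∫⁻ x in A, ENNReal.ofReal
          (if 0 < x then
            x ^ (a / γ - 1) * Real.exp (-(x ^ (1 / γ)) / s) / (γ * Real.Gamma a * s ^ a)
          else 0) := by
  have hγ' : γ ≠ 0 := hγ.ne'
  set g : ℝ → ℝ := fun x => x ^ γ with hg
  have hgmeas : Measurable g := measurable_id.pow_const γ
  set B : Set ℝ := g ⁻¹' A ∩ Ioi 0 with hB
  have hBmeas : MeasurableSet B := (hgmeas hA).inter measurableSet_Ioi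
  have hinv : ∀ x : ℝ, 0 < x → (x ^ γ) ^ (1/γ) = x := fun x hx => by
    rw [one_div, ← Real.rpow_mul hx.le, mul_inv_cancel₀ hγ', Real.rpow_one]
  have himg : g '' B = A ∩ Ioi 0 := by
    ext y
    constructor
    · rintro ⟨x, ⟨hxA, hx0⟩, rfl⟩
      exact ⟨hxA, Real.rpow_pos_of_pos hx0 γ⟩
    · rintro ⟨hyA, hy0⟩
      refine ⟨y ^ (1/γ), ⟨?_, Real.rpow_pos_of_pos hy0 _⟩, ?_⟩ <;>
        simp [hg, ← Real.rpow_mul (le_of_lt hy0), one_div,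
          inv_mul_cancel₀ hγ', hyA]
  have hderiv : ∀ x ∈ B, HasDerivWithinAt g (γ * x ^ (γ - 1)) B x := fun x hx =>
    (Real.hasDerivAt_rpow_const (Or.inl (ne_of_gt hx.2))).hasDerivWithinAt
  have hinj : Set.InjOn g B := fun x hx y hy hxy => by
    rw [← hinv x hx.2, ← hinv y hy.2]; exact congrArg (· ^ (1/γ)) hxy
  set w : ℝ → ENNReal := fun x => ENNReal.ofReal
          (if 0 < x then
            x ^ (a / γ - 1) * Real.exp (-(x ^ (1 / γ)) / s) / (γ * Real.Gamma a * s ^ a)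
          else 0) with hw
  set f : ℝ → ENNReal := fun x => ENNReal.ofReal
      (if 0 < x then x ^ (a - 1) * Real.exp (-x / s) / (Real.Gamma a * s ^ a) else 0) with hf
  -- reduce both sides to integrals over intersections with Ioi 0
  have hfz : ∀ x, x ∉ Ioi (0:ℝ) → f x = 0 := fun x hx => by
    simp only [hf]; rw [if_neg (show ¬ 0 < x from fun h => hx h), ENNReal.ofReal_zero]
  have hwz : ∀ x, x ∉ Ioi (0:ℝ) → w x = 0 := fun x hx => by
    simp only [hw]; rw [if_neg (show ¬ 0 < x from fun h => hx h), ENNReal.ofReal_zero]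
  have key : ∫⁻ x in A ∩ Ioi 0, w x = ∫⁻ x in B, f x := by
    rw [← himg, lintegral_image_eq_lintegral_abs_deriv_mul' hBmeas hderiv hinj]
    refine setLIntegral_congr_fun hBmeas (fun x hx => ?_)
    have hx0 : 0 < x := hx.2
    have hxγ : 0 < x ^ γ := Real.rpow_pos_of_pos hx0 γ
    have habs : |γ * x ^ (γ - 1)| = γ * x ^ (γ - 1) :=
      abs_of_pos (mul_pos hγ (Real.rpow_pos_of_pos hx0 _))
    rw [hf, hw]
    simp only [hg, habs, if_pos hxγ, if_pos hx0, hinv x hx0]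
    rw [← ENNReal.ofReal_mul (by positivity)]
    congr 1
    have hpow : (x ^ γ) ^ (a / γ - 1) = x ^ (a - γ) := by
      rw [← Real.rpow_mul hx0.le]
      congr 1
      field_simp
    rw [hpow]
    rw [show x ^ (a - γ) = x ^ (a - 1) * x ^ (1 - γ) by
      rw [← Real.rpow_add hx0]; ring_nf]
    have h2 : x ^ (γ - 1) * x ^ (1 - γ) = 1 := by
      rw [← Real.rpow_add hx0]; norm_num
    have hΓ : Real.Gamma a ≠ 0 := (Real.Gamma_pos_of_pos ha).ne'
    have hS : s ^ a ≠ 0 := (Real.rpow_pos_of_pos hs a).ne'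
    field_simp
    linear_combination h2
  calc ∫⁻ x in g ⁻¹' A, f x = ∫⁻ x in B, f x := by
        rw [hB]
        rw [← lintegral_indicator (hgmeas hA) f]
        rw [← lintegral_indicator hBmeas f]
        congr 1
        ext x
        by_cases hx : x ∈ Ioi (0:ℝ)
        · by_cases hxa : x ∈ g ⁻¹' A
          · rw [Set.indicator_of_mem hxa f, Set.indicator_of_mem (Set.mem_inter hxa hx) f]
          · rw [Set.indicator_of_notMem hxa f,
              Set.indicator_of_notMem (fun hxB => hxa hxB.1 : x ∉ B) f]
        · by_cases hxa : x ∈ g ⁻¹' A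
          · rw [Set.indicator_of_mem hxa f,
              Set.indicator_of_notMem (fun hxB => hx hxB.2 : x ∉ B) f, hfz x hx]
          · rw [Set.indicator_of_notMem hxa f,
              Set.indicator_of_notMem (fun hxB => hx hxB.2 : x ∉ B) f]
    _ = ∫⁻ x in A ∩ Ioi 0, w x := key.symm
    _ = ∫⁻ x in A, w x := by
        rw [← lintegral_indicator hA w, ← lintegral_indicator (hA.inter measurableSet_Ioi) w]
        congr 1
        ext x
        by_cases hx : x ∈ Ioi (0:ℝ)
        · by_cases hxa : x ∈ A
          · rw [Set.indicator_of_mem hxa w,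
              Set.indicator_of_mem (Set.mem_inter hxa hx) w]
          · rw [Set.indicator_of_notMem hxa w,
              Set.indicator_of_notMem (fun hxB => hxa hxB.1 : x ∉ A ∩ Ioi 0) w]
        · by_cases hxa : x ∈ A
          · rw [Set.indicator_of_mem hxa w,
              Set.indicator_of_notMem (fun hxB => hx hxB.2 : x ∉ A ∩ Ioi 0) w, hwz x hx]
          · rw [Set.indicator_of_notMem hxa w,
              Set.indicator_of_notMem (fun hxB => hx hxB.2 : x ∉ A ∩ Ioi 0) w]


/-- **Proposition 2 of the paper.** If `X` has the `Gamma(a, s)` distribution and `γ > 0`,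
then the law of `X^γ` has density `w(x) = x^(a/γ − 1)·exp(−x^(1/γ)/s)/(γ·Γ(a)·s^a)`
with respect to Lebesgue measure on `(0, ∞)` and density `0` on `(−∞, 0]`. -/
theorem law_rpow_gamma_density {Ω : Type*} [MeasurableSpace Ω] (P : Measure Ω)
    [IsProbabilityMeasure P] (X : Ω → ℝ) (hX : Measurable X)
    (a s γ : ℝ) (ha : 0 < a) (hs : 0 < s) (hγ : 0 < γ)
    (hlaw : Measure.map X P = gammaScaleMeasure a s) :
    Measure.map (fun ω => X ω ^ γ) P =
      volume.withDensity fun x =>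
        ENNReal.ofReal
          (if 0 < x then
            x ^ (a / γ - 1) * Real.exp (-(x ^ (1 / γ)) / s) / (γ * Real.Gamma a * s ^ a)
          else 0) := by
  have hgmeas : Measurable fun x : ℝ => x ^ γ := measurable_id.pow_const γ
  have hcomp : Measure.map (fun ω => X ω ^ γ) P
      = Measure.map (fun x : ℝ => x ^ γ) (gammaScaleMeasure a s) := by
    rw [← hlaw, Measure.map_map hgmeas hX]; rfl
  rw [hcomp]
  ext A hA
  rw [Measure.map_apply hgmeas hA, gammaScaleMeasure,
    withDensity_apply _ (hgmeas hA), withDensity_apply _ hA]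
  exact setLIntegral_rpow_gamma_aux a s γ ha hs hγ A hA
end
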